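/- For any probability density f on ℝ symmetric about 0 and any CDF G, the skew-symmetric function s(y;λ) = 2 f(y) G(λ y) is itself a probability density on ℝ for every λ ∈ ℝ, i.e., s ≥ 0 and ∫_ℝ 2 f(y) G(λ y) dy = 1. -/

import Mathlib

open MeasureTheory Set

/-- for f a symmetric density and G a continuous CDF with
G(-t) = 1 - G(t), the function s(y;λ) = 2 f(y) G(λy) is a probability density
for every λ. -/
theorem skew_symmetric_is_density
    (f G : ℝ → ℝ)
    (hf_meas : Measurable f) (hf_nonneg : ∀ y, 0 ≤ f y)
    (hf_symm : ∀ y, f (-y) = f y) (hf_int : ∫ y, f y = 1)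
    (hf_integrable : Integrable f)
    (hG_cont : Continuous G) (hG01 : ∀ t, G t ∈ Icc (0:ℝ) 1)
    (hG_symm : ∀ t, G (-t) = 1 - G t) :
    ∀ lam : ℝ,
      (∀ y, 0 ≤ 2 * f y * G (lam * y)) ∧
      ∫ y, 2 * f y * G (lam * y) = 1 := by
  intro lam
  constructor
  · intro y
    have h := (hG01 (lam * y)).1
    have := hf_nonneg y
    nlinarith
  · have hint : Integrable (fun y => f y * G (lam * y)) := by
      have := hf_integrable.bdd_mul
        (hG_cont.comp (continuous_const.mul continuous_id)).aestronglyMeasurable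
        (c := 1) (Filter.Eventually.of_forall fun y => abs_le.2 ⟨by simpa using by linarith [(hG01 (lam*y)).1], by simpa using (hG01 (lam*y)).2⟩)
      simpa [mul_comm] using this
    have hsub : ∫ y, f y * G (lam * y) = ∫ y, f (-y) * G (lam * (-y)) := by
      rw [← integral_neg_eq_self]
    have key : ∫ y, f y * G (lam * y) = ∫ y, f y * (1 - G (lam * y)) := by
      rw [hsub]
      congr 1
      ext y
      rw [hf_symm, mul_neg, hG_symm]
    have h2 : ∫ y, f y * (1 - G (lam * y)) = 1 - ∫ y, f y * G (lam * y) := by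
      simp only [mul_sub, mul_one]
      rw [integral_sub hf_integrable hint, hf_int]
    have : ∫ y, f y * G (lam * y) = 1/2 := by linarith [key, h2]
    calc ∫ y, 2 * f y * G (lam * y) = 2 * ∫ y, f y * G (lam * y) := by
          rw [← integral_const_mul]; congr 1; ext y; ring
      _ = 1 := by rw [this]; norm_num
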